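/- Let $d : \mathbb{N} \times \mathbb{N} \to \mathbb{R}$. Then $d$ satisfies the recurrence $d_{l,m} + d_{l+1,m+2} + d_{l+2,m+1} = d_{l+2,m+2} + d_{l,m+1} + d_{l+1,m}$ for all $l, m \geq 0$ if and only if there exists a function $k : \mathbb{N} \to \mathbb{R}$ such that $d_{l+1,m+2} - d_{l+1,m+1} - d_{l,m+1} + d_{l,m} = k(m)$ for all $l, m \geq 0$ (i.e., the left-hand side depends only on $m$ and not on $l$). -/
import Mathlib


/-- Proposition 1(iii): the universal degree recurrence is equivalent to
`d (l+1,m+2) - d (l+1,m+1) - d (l,m+1) + d (l,m)` depending only on `m`. -/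
theorem stmt_2 (d : ℕ × ℕ → ℝ) :
    (∀ l m : ℕ, d (l, m) + d (l + 1, m + 2) + d (l + 2, m + 1) =
        d (l + 2, m + 2) + d (l, m + 1) + d (l + 1, m)) ↔
    (∃ k : ℕ → ℝ, ∀ l m : ℕ,
        d (l + 1, m + 2) - d (l + 1, m + 1) - d (l, m + 1) + d (l, m) = k m) := by
  constructor
  · intro h
    refine ⟨fun m => d (1, m + 2) - d (1, m + 1) - d (0, m + 1) + d (0, m), ?_⟩
    intro l m
    induction l with
    | zero => rfl
    | succ n ih =>
      have := h n m
      linarith [ih]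
  · rintro ⟨k, hk⟩ l m
    have h1 := hk l m
    have h2 := hk (l + 1) m
    linarith
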